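/- Let ℓ ≥ 1 and let η₁, …, η_{2ℓ} ∈ ℝ. Then ∫₀^{2π} ∏_{i=1}^{2ℓ} cos(θ − ηᵢ) dθ = (2π / (2^{2ℓ} (ℓ!)²)) · ∑_{π ∈ S_{2ℓ}} cos(∑_{j=1}^{ℓ} (η_{π(j)} − η_{π(ℓ+j)})), where the sum runs over all permutations π of {1, 2, …, 2ℓ}. -/

import Mathlib

open Finset Real Complex

set_option maxHeartbeats 1000000

variable {ℓ : ℕ}

private lemma castAdd_ne_natAdd (i j : Fin ℓ) : Fin.castAdd ℓ i ≠ Fin.natAdd ℓ j := by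
  intro h
  have := congrArg Fin.val h
  simp [Fin.castAdd, Fin.natAdd, Fin.castLE] at this
  omega

private lemma fin_cases_add (y : Fin (ℓ + ℓ)) :
    (∃ i, y = Fin.castAdd ℓ i) ∨ ∃ j, y = Fin.natAdd ℓ j :=
  Fin.addCases (fun i => Or.inl ⟨i, rfl⟩) (fun j => Or.inr ⟨j, rfl⟩) y

private def halfImage (e : Equiv.Perm (Fin (ℓ + ℓ))) : Finset (Fin (ℓ + ℓ)) :=
  Finset.image (fun j => e (Fin.castAdd ℓ j)) Finset.univ

private lemma card_halfImage (e : Equiv.Perm (Fin (ℓ + ℓ))) : (halfImage e).card = ℓ := by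
  rw [halfImage, Finset.card_image_of_injective _
    (fun a b hab => Fin.castAdd_injective _ _ (e.injective hab))]
  simp

private lemma natAdd_not_mem_halfImage (e : Equiv.Perm (Fin (ℓ + ℓ))) (j : Fin ℓ) :
    e (Fin.natAdd ℓ j) ∉ halfImage e := by
  simp only [halfImage, Finset.mem_image, Finset.mem_univ, true_and]
  rintro ⟨i, hi⟩
  exact castAdd_ne_natAdd i j (e.injective hi)

private lemma image_natAdd_eq_compl (e : Equiv.Perm (Fin (ℓ + ℓ))) :
    Finset.image (fun j => e (Fin.natAdd ℓ j)) Finset.univ = (halfImage e)ᶜ := by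
  ext x
  simp only [Finset.mem_image, Finset.mem_univ, true_and, Finset.mem_compl]
  constructor
  · rintro ⟨j, rfl⟩; exact natAdd_not_mem_halfImage e j
  · intro hx
    obtain ⟨y, rfl⟩ := e.surjective x
    rcases fin_cases_add y with ⟨i, rfl⟩ | ⟨j, rfl⟩
    · exact absurd (Finset.mem_image_of_mem _ (Finset.mem_univ i)) hx
    · exact ⟨j, rfl⟩

private def toPerm (t : Finset (Fin (ℓ + ℓ))) (f : Fin ℓ ≃ {x // x ∈ t})
    (g : Fin ℓ ≃ {x // x ∈ tᶜ}) : Equiv.Perm (Fin (ℓ + ℓ)) :=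
  finSumFinEquiv.symm.trans ((f.sumCongr g).trans
    (((Equiv.refl _).sumCongr (Equiv.subtypeEquivRight (fun _ => Finset.mem_compl))).trans
      (Equiv.sumCompl (· ∈ t))))

private lemma toPerm_castAdd (t : Finset (Fin (ℓ + ℓ))) (f : Fin ℓ ≃ {x // x ∈ t})
    (g : Fin ℓ ≃ {x // x ∈ tᶜ}) (j : Fin ℓ) :
    toPerm t f g (Fin.castAdd ℓ j) = (f j : Fin (ℓ + ℓ)) := by
  rw [toPerm, Equiv.trans_apply, finSumFinEquiv_symm_apply_castAdd, Equiv.trans_apply,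
    Equiv.sumCongr_apply, Sum.map_inl, Equiv.trans_apply, Equiv.sumCongr_apply, Sum.map_inl,
    Equiv.sumCompl_apply_inl]
  rfl

private lemma toPerm_natAdd (t : Finset (Fin (ℓ + ℓ))) (f : Fin ℓ ≃ {x // x ∈ t})
    (g : Fin ℓ ≃ {x // x ∈ tᶜ}) (j : Fin ℓ) :
    toPerm t f g (Fin.natAdd ℓ j) = (g j : Fin (ℓ + ℓ)) := by
  rw [toPerm, Equiv.trans_apply, finSumFinEquiv_symm_apply_natAdd, Equiv.trans_apply,
    Equiv.sumCongr_apply, Sum.map_inr, Equiv.trans_apply, Equiv.sumCongr_apply, Sum.map_inr,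
    Equiv.sumCompl_apply_inr]
  rfl

private lemma halfImage_toPerm (t : Finset (Fin (ℓ + ℓ))) (f : Fin ℓ ≃ {x // x ∈ t})
    (g : Fin ℓ ≃ {x // x ∈ tᶜ}) : halfImage (toPerm t f g) = t := by
  ext x
  simp only [halfImage, Finset.mem_image, Finset.mem_univ, true_and, toPerm_castAdd]
  constructor
  · rintro ⟨j, rfl⟩; exact (f j).2
  · intro hx; exact ⟨f.symm ⟨x, hx⟩, by simp⟩

private lemma card_fiber (t : Finset (Fin (ℓ + ℓ))) (ht : t.card = ℓ) :
    (Finset.univ.filter fun e : Equiv.Perm (Fin (ℓ + ℓ)) => halfImage e = t).card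
      = ℓ.factorial * ℓ.factorial := by
  classical
  have hct : Fintype.card {x // x ∈ t} = ℓ := by rw [Fintype.card_coe, ht]
  have hcc : Fintype.card {x // x ∈ tᶜ} = ℓ := by
    rw [Fintype.card_coe, Finset.card_compl, ht]
    simp only [Fintype.card_fin]; omega
  have key : (Finset.univ : Finset ((Fin ℓ ≃ {x // x ∈ t}) × (Fin ℓ ≃ {x // x ∈ tᶜ}))).card
      = (Finset.univ.filter fun e : Equiv.Perm (Fin (ℓ + ℓ)) => halfImage e = t).card := by
    apply Finset.card_bij (fun p _ => toPerm t p.1 p.2)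
    · rintro ⟨f, g⟩ -
      simp only [Finset.mem_filter, Finset.mem_univ, true_and]
      exact halfImage_toPerm t f g
    · rintro ⟨f, g⟩ - ⟨f', g'⟩ - h'
      have hf : f = f' := by
        ext j
        have h1 := Equiv.congr_fun h' (Fin.castAdd ℓ j)
        rw [toPerm_castAdd, toPerm_castAdd] at h1
        exact congrArg Fin.val h1
      have hg : g = g' := by
        ext j
        have h1 := Equiv.congr_fun h' (Fin.natAdd ℓ j)
        rw [toPerm_natAdd, toPerm_natAdd] at h1
        exact congrArg Fin.val h1
      rw [Prod.ext_iff]; exact ⟨hf, hg⟩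
    · intro e hee
      have he : halfImage e = t := (Finset.mem_filter.mp hee).2
      have hmemf : ∀ j : Fin ℓ, e (Fin.castAdd ℓ j) ∈ t := by
        intro j; rw [← he]; exact Finset.mem_image_of_mem _ (Finset.mem_univ j)
      have hmemg : ∀ j : Fin ℓ, e (Fin.natAdd ℓ j) ∈ tᶜ := by
        intro j; rw [← he, Finset.mem_compl]; exact natAdd_not_mem_halfImage e j
      have hinjf : Function.Injective
          (fun j : Fin ℓ => (⟨e (Fin.castAdd ℓ j), hmemf j⟩ : {x // x ∈ t})) := by
        intro a b hab
        exact Fin.castAdd_injective _ _ (e.injective (congrArg Subtype.val hab))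
      have hinjg : Function.Injective
          (fun j : Fin ℓ => (⟨e (Fin.natAdd ℓ j), hmemg j⟩ : {x // x ∈ tᶜ})) := by
        intro a b hab
        exact (Fin.natAddEmb ℓ).injective (e.injective (congrArg Subtype.val hab))
      have hbf : Function.Bijective
          (fun j : Fin ℓ => (⟨e (Fin.castAdd ℓ j), hmemf j⟩ : {x // x ∈ t})) :=
        (Fintype.bijective_iff_injective_and_card _).mpr ⟨hinjf, by rw [hct, Fintype.card_fin]⟩
      have hbg : Function.Bijective
          (fun j : Fin ℓ => (⟨e (Fin.natAdd ℓ j), hmemg j⟩ : {x // x ∈ tᶜ})) :=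
        (Fintype.bijective_iff_injective_and_card _).mpr ⟨hinjg, by rw [hcc, Fintype.card_fin]⟩
      refine ⟨(Equiv.ofBijective _ hbf, Equiv.ofBijective _ hbg), Finset.mem_univ _, ?_⟩
      apply Equiv.ext
      intro x
      rcases fin_cases_add x with ⟨i, rfl⟩ | ⟨j, rfl⟩
      · rw [toPerm_castAdd]; rfl
      · rw [toPerm_natAdd]; rfl
  rw [← key, Finset.card_univ, Fintype.card_prod,
    Fintype.card_equiv (Fintype.equivFinOfCardEq hct).symm,
    Fintype.card_equiv (Fintype.equivFinOfCardEq hcc).symm, Fintype.card_fin]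

private lemma sum_perm_eq (η : Fin (ℓ + ℓ) → ℝ) :
    ∑ e : Equiv.Perm (Fin (ℓ + ℓ)),
        Real.cos (∑ j : Fin ℓ, (η (e (Fin.castAdd ℓ j)) - η (e (Fin.natAdd ℓ j))))
      = (ℓ.factorial * ℓ.factorial : ℝ) *
          ∑ t ∈ Finset.univ.filter (fun t : Finset (Fin (ℓ + ℓ)) => t.card = ℓ),
            Real.cos (∑ i ∈ t, η i - ∑ i ∈ tᶜ, η i) := by
  classical
  rw [← Finset.sum_fiberwise_of_maps_to (g := halfImage)
    (t := Finset.univ.filter (fun t : Finset (Fin (ℓ + ℓ)) => t.card = ℓ))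
    (fun e _ => Finset.mem_filter.mpr ⟨Finset.mem_univ _, card_halfImage e⟩)]
  rw [Finset.mul_sum]
  apply Finset.sum_congr rfl
  intro t _
  have hval : ∀ e ∈ Finset.univ.filter
      (fun e : Equiv.Perm (Fin (ℓ + ℓ)) => halfImage e = t),
      Real.cos (∑ j : Fin ℓ, (η (e (Fin.castAdd ℓ j)) - η (e (Fin.natAdd ℓ j))))
        = Real.cos (∑ i ∈ t, η i - ∑ i ∈ tᶜ, η i) := by
    intro e he
    have he' : halfImage e = t := (Finset.mem_filter.mp he).2
    have h1 : ∑ j : Fin ℓ, η (e (Fin.castAdd ℓ j)) = ∑ i ∈ t, η i := by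
      rw [← he', halfImage, Finset.sum_image]
      intro a _ b _ hab
      exact Fin.castAdd_injective _ _ (e.injective hab)
    have h2 : ∑ j : Fin ℓ, η (e (Fin.natAdd ℓ j)) = ∑ i ∈ tᶜ, η i := by
      rw [← he', ← image_natAdd_eq_compl e, Finset.sum_image]
      intro a _ b _ hab
      exact (Fin.natAddEmb ℓ).injective (e.injective hab)
    rw [Finset.sum_sub_distrib, h1, h2]
  rw [Finset.sum_congr rfl hval, Finset.sum_const, card_fiber t
    (by simpa using (Finset.mem_filter.mp ‹t ∈ _›).2), nsmul_eq_mul]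
  push_cast
  ring

-- termwise integral
private lemma integral_exp_term (m : ℤ) (c : ℝ) :
    (∫ θ in (0:ℝ)..(2*π), Complex.exp ((((m : ℝ) * θ - c : ℝ) : ℂ) * Complex.I))
      = if m = 0 then 2 * π * Complex.exp (-(c:ℂ) * Complex.I) else 0 := by
  have hrw : ∀ θ : ℝ, ((((m : ℝ) * θ - c : ℝ) : ℂ) * Complex.I)
      = (-(c:ℂ) * Complex.I) + ((m : ℂ) * Complex.I) * (θ : ℂ) := by
    intro θ; push_cast; ring
  simp only [hrw, Complex.exp_add]
  rw [intervalIntegral.integral_const_mul]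
  by_cases hm : m = 0
  · subst hm
    simp [mul_comm]
  · rw [integral_exp_mul_complex (by
      exact mul_ne_zero (Int.cast_ne_zero.mpr hm) Complex.I_ne_zero)]
    rw [if_neg hm]
    have h1 : (m : ℂ) * Complex.I * ((2:ℝ) * π : ℝ) = (m : ℂ) * (2 * (π:ℂ) * Complex.I) := by
      push_cast; ring
    rw [h1, Complex.exp_int_mul_two_pi_mul_I]
    simp

private lemma pointwise_expand (ℓ : ℕ) (η : Fin (ℓ + ℓ) → ℝ) (θ : ℝ) :
    (∏ i, Complex.cos ((θ : ℂ) - (η i : ℂ)))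
      = ∑ t ∈ (Finset.univ : Finset (Fin (ℓ + ℓ))).powerset,
          ((2:ℂ)⁻¹) ^ (ℓ + ℓ) *
            Complex.exp ((((((t.card : ℤ) - ((tᶜ : Finset (Fin (ℓ+ℓ))).card : ℤ) : ℤ) : ℝ) * θ
              - (∑ i ∈ t, η i - ∑ i ∈ tᶜ, η i) : ℝ) : ℂ) * Complex.I) := by
  classical
  have hcos : ∀ i : Fin (ℓ + ℓ), Complex.cos ((θ : ℂ) - (η i : ℂ))
      = (2:ℂ)⁻¹ * (Complex.exp (((θ : ℂ) - (η i : ℂ)) * Complex.I)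
          + Complex.exp (-(((θ : ℂ) - (η i : ℂ))) * Complex.I)) := by
    intro i; rw [Complex.cos]; ring
  rw [Finset.prod_congr rfl (fun i _ => hcos i), Finset.prod_mul_distrib,
    Finset.prod_const, Finset.card_univ, Fintype.card_fin, Finset.prod_add, Finset.mul_sum]
  apply Finset.sum_congr rfl
  intro t ht
  congr 1
  rw [← Complex.exp_sum, ← Complex.exp_sum, ← Complex.exp_add]
  congr 1
  have hsdiff : Finset.univ \ t = tᶜ := (Finset.compl_eq_univ_sdiff t).symm
  rw [hsdiff]
  have h1 : ∑ i ∈ t, ((θ : ℂ) - (η i : ℂ)) * Complex.I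
      = ((t.card : ℂ) * θ - (∑ i ∈ t, (η i : ℂ))) * Complex.I := by
    rw [← Finset.sum_mul, Finset.sum_sub_distrib, Finset.sum_const, nsmul_eq_mul]
  have h2 : ∑ i ∈ tᶜ, -((θ : ℂ) - (η i : ℂ)) * Complex.I
      = -(((tᶜ : Finset (Fin (ℓ+ℓ))).card : ℂ) * θ - (∑ i ∈ tᶜ, (η i : ℂ))) * Complex.I := by
    rw [← Finset.sum_mul]
    congr 1
    rw [Finset.sum_neg_distrib, Finset.sum_sub_distrib, Finset.sum_const, nsmul_eq_mul]
  rw [h1, h2]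
  push_cast
  ring

private lemma integral_eq (ℓ : ℕ) (η : Fin (ℓ + ℓ) → ℝ) :
    (∫ θ in (0:ℝ)..(2*π), ∏ i, Real.cos (θ - η i))
      = (2 * π / 2 ^ (ℓ + ℓ)) *
          ∑ t ∈ Finset.univ.filter (fun t : Finset (Fin (ℓ + ℓ)) => t.card = ℓ),
            Real.cos (∑ i ∈ t, η i - ∑ i ∈ tᶜ, η i) := by
  classical
  have hcast : ((∫ θ in (0:ℝ)..(2*π), ∏ i, Real.cos (θ - η i) : ℝ) : ℂ)
      = ∫ θ in (0:ℝ)..(2*π), ∏ i, Complex.cos ((θ : ℂ) - (η i : ℂ)) := by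
    rw [← intervalIntegral.integral_ofReal]
    congr 1
    funext θ
    push_cast
    rfl
  have hint : (∫ θ in (0:ℝ)..(2*π), ∏ i, Complex.cos ((θ : ℂ) - (η i : ℂ)))
      = ∑ t ∈ (Finset.univ : Finset (Fin (ℓ + ℓ))).powerset,
          ((2:ℂ)⁻¹) ^ (ℓ + ℓ) *
            ∫ θ in (0:ℝ)..(2*π),
              Complex.exp ((((((t.card : ℤ) - ((tᶜ : Finset (Fin (ℓ+ℓ))).card : ℤ) : ℤ) : ℝ) * θ
                - (∑ i ∈ t, η i - ∑ i ∈ tᶜ, η i) : ℝ) : ℂ) * Complex.I) := by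
    rw [intervalIntegral.integral_congr (g := fun θ =>
      ∑ t ∈ (Finset.univ : Finset (Fin (ℓ + ℓ))).powerset,
          ((2:ℂ)⁻¹) ^ (ℓ + ℓ) *
            Complex.exp ((((((t.card : ℤ) - ((tᶜ : Finset (Fin (ℓ+ℓ))).card : ℤ) : ℤ) : ℝ) * θ
              - (∑ i ∈ t, η i - ∑ i ∈ tᶜ, η i) : ℝ) : ℂ) * Complex.I))
      (fun θ _ => pointwise_expand ℓ η θ)]
    rw [intervalIntegral.integral_finset_sum]
    · exact Finset.sum_congr rfl fun t _ => intervalIntegral.integral_const_mul _ _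
    · intro t _
      apply Continuous.intervalIntegrable
      fun_prop
  rw [hint] at hcast
  have hterm : ∀ t ∈ (Finset.univ : Finset (Fin (ℓ + ℓ))).powerset,
      ((2:ℂ)⁻¹) ^ (ℓ + ℓ) *
          (∫ θ in (0:ℝ)..(2*π),
            Complex.exp ((((((t.card : ℤ) - ((tᶜ : Finset (Fin (ℓ+ℓ))).card : ℤ) : ℤ) : ℝ) * θ
              - (∑ i ∈ t, η i - ∑ i ∈ tᶜ, η i) : ℝ) : ℂ) * Complex.I))
        = if t.card = ℓ then
            ((2:ℂ)⁻¹) ^ (ℓ + ℓ) * (2 * π *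
              Complex.exp (-((∑ i ∈ t, η i - ∑ i ∈ tᶜ, η i : ℝ) : ℂ) * Complex.I))
          else 0 := by
    intro t _
    rw [integral_exp_term]
    have hiff : ((t.card : ℤ) - ((tᶜ : Finset (Fin (ℓ+ℓ))).card : ℤ) = 0) ↔ t.card = ℓ := by
      have h1 : (tᶜ : Finset (Fin (ℓ+ℓ))).card = (ℓ + ℓ) - t.card := by
        rw [Finset.card_compl, Fintype.card_fin]
      have h2 : t.card ≤ ℓ + ℓ := by
        simpa [Fintype.card_fin] using Finset.card_le_univ t
      omega
    by_cases hc : t.card = ℓ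
    · rw [if_pos (hiff.mpr hc), if_pos hc]
    · rw [if_neg (fun h => hc (hiff.mp h)), if_neg hc, mul_zero]
  rw [Finset.sum_congr rfl hterm] at hcast
  rw [← Finset.sum_filter, Finset.powerset_univ] at hcast
  have hre := congrArg Complex.re hcast
  rw [Complex.ofReal_re] at hre
  rw [hre, Complex.re_sum, Finset.mul_sum]
  apply Finset.sum_congr rfl
  intro t _
  have h3 : ((2:ℂ)⁻¹) ^ (ℓ + ℓ) * (2 * π *
        Complex.exp (-((∑ i ∈ t, η i - ∑ i ∈ tᶜ, η i : ℝ) : ℂ) * Complex.I))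
      = (((2:ℝ)⁻¹ ^ (ℓ + ℓ) * (2 * π) : ℝ) : ℂ) *
          Complex.exp (((-(∑ i ∈ t, η i - ∑ i ∈ tᶜ, η i) : ℝ) : ℂ) * Complex.I) := by
    push_cast
    ring
  rw [h3, Complex.re_ofReal_mul, Complex.exp_ofReal_mul_I_re, Real.cos_neg]
  rw [div_eq_mul_inv]
  simp only [inv_pow]
  ring


open Real in
/-- The full-period integral of a product of `2ℓ` cosines of common frequency
with arbitrary phases equals a symmetrized sum of cosines of signed phase
combinations (eq. (32) of the paper). -/
theorem integral_prod_cos_even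
    (ℓ : ℕ) (hℓ : 1 ≤ ℓ) (η : Fin (ℓ + ℓ) → ℝ) :
    (∫ θ in (0 : ℝ)..(2 * π), ∏ i, Real.cos (θ - η i)) =
      (2 * π / (2 ^ (2 * ℓ) * ((ℓ.factorial : ℝ)) ^ 2)) *
        ∑ e : Equiv.Perm (Fin (ℓ + ℓ)),
          Real.cos (∑ j : Fin ℓ, (η (e (Fin.castAdd ℓ j)) - η (e (Fin.natAdd ℓ j)))) := by
  rw [integral_eq ℓ η, sum_perm_eq η, two_mul]
  have hF : ((ℓ.factorial : ℝ)) ≠ 0 := Nat.cast_ne_zero.mpr ℓ.factorial_ne_zero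
  have h2 : ((2:ℝ) ^ (ℓ + ℓ)) ≠ 0 := by positivity
  field_simp
  ring
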